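/- Let f : ℝᵈ → ℝ be C² and semi-strongly self-concordant with constant L ≥ 0, i.e., ‖∇²f(y) − ∇²f(x)‖_op,x ≤ L·‖y−x‖_x for all x, y, where ‖·‖_x is the local norm ‖h‖_x = ⟨∇²f(x)h, h⟩^{1/2} and ‖·‖_op,x the corresponding operator norm. Then for all x, y: |f(y) − f(x) − ⟨∇f(x), y−x⟩ − (1/2)⟨∇²f(x)(y−x), y−x⟩| ≤ (L/6)·‖y−x‖_x³. -/

import Mathlib

open RealInnerProductSpace

private lemma aux_mono (F F' : ℝ → ℝ) (hF : ∀ t, HasDerivAt F (F' t) t)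
    (hpos : ∀ t ∈ Set.Icc (0:ℝ) 1, 0 ≤ F' t) {t : ℝ} (ht : t ∈ Set.Icc (0:ℝ) 1) :
    F 0 ≤ F t := by
  have hmono : MonotoneOn F (Set.Icc (0:ℝ) 1) := by
    apply monotoneOn_of_deriv_nonneg (convex_Icc 0 1)
    · exact (continuous_iff_continuousAt.2 fun s => (hF s).continuousAt).continuousOn
    · exact fun s _ => ((hF s).differentiableAt).differentiableWithinAt
    · intro s hs
      rw [interior_Icc] at hs
      rw [(hF s).deriv]
      exact hpos s ⟨le_of_lt hs.1, le_of_lt hs.2⟩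
  exact hmono (Set.left_mem_Icc.2 zero_le_one) ht ht.1

private lemma aux_bound (F B F' B' : ℝ → ℝ) (hF : ∀ t, HasDerivAt F (F' t) t)
    (hB : ∀ t, HasDerivAt B (B' t) t)
    (hb : ∀ t ∈ Set.Icc (0:ℝ) 1, |F' t| ≤ B' t) {t : ℝ} (ht : t ∈ Set.Icc (0:ℝ) 1) :
    |F t - F 0| ≤ B t - B 0 := by
  rw [abs_le]
  constructor
  · have := aux_mono (fun s => B s + F s) (fun s => B' s + F' s)
      (fun s => (hB s).add (hF s))
      (fun s hs => by
        show 0 ≤ B' s + F' s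
        linarith [(abs_le.1 (hb s hs)).1]) ht
    linarith
  · have := aux_mono (fun s => B s - F s) (fun s => B' s - F' s)
      (fun s => (hB s).sub (hF s))
      (fun s hs => by
        show 0 ≤ B' s - F' s
        linarith [(abs_le.1 (hb s hs)).2]) ht
    linarith

theorem taylor_bound_semi_strong_self_concordant {d : ℕ}
    (f : EuclideanSpace ℝ (Fin d) → ℝ)
    (hess : EuclideanSpace ℝ (Fin d) → EuclideanSpace ℝ (Fin d) →L[ℝ] EuclideanSpace ℝ (Fin d))
    (L : ℝ) (hL : 0 ≤ L)
    (hf : ContDiff ℝ 2 f)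
    (hhess : ∀ x, HasFDerivAt (gradient f) (hess x) x)
    -- semi-strong self-concordance: operator norm (induced by the local norm) bound,
    -- stated equivalently as a bilinear-form bound
    (hssc : ∀ x y u v, |⟪(hess y - hess x) u, v⟫| ≤
      L * Real.sqrt ⟪hess x (y - x), y - x⟫ *
        (Real.sqrt ⟪hess x u, u⟫ * Real.sqrt ⟪hess x v, v⟫)) :
    ∀ x y, |f y - f x - ⟪gradient f x, y - x⟫ - 1 / 2 * ⟪hess x (y - x), y - x⟫| ≤
      L / 6 * Real.sqrt ⟪hess x (y - x), y - x⟫ ^ 3 := by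
  intro x y
  set v : EuclideanSpace ℝ (Fin d) := y - x with hv
  set s : ℝ := Real.sqrt ⟪hess x v, v⟫ with hs
  have hs0 : 0 ≤ s := Real.sqrt_nonneg _
  have hdf : Differentiable ℝ f := hf.differentiable (by norm_num)
  -- the line path
  have hline : ∀ t : ℝ, HasDerivAt (fun t : ℝ => x + t • v) v t := by
    intro t
    simpa using ((hasDerivAt_id t).smul_const v).const_add x
  -- derivative of t ↦ f (x + t • v)
  have hg : ∀ t : ℝ, HasDerivAt (fun t : ℝ => f (x + t • v))
      ⟪gradient f (x + t • v), v⟫ t := by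
    intro t
    have h1 : HasGradientAt f (gradient f (x + t • v)) (x + t • v) :=
      (hdf (x + t • v)).hasGradientAt
    have h2 := h1.hasFDerivAt.comp_hasDerivAt t (hline t)
    exact h2
  -- derivative of t ↦ ⟪gradient f (x + t • v), v⟫
  have hg' : ∀ t : ℝ, HasDerivAt (fun t : ℝ => ⟪gradient f (x + t • v), v⟫)
      ⟪hess (x + t • v) v, v⟫ t := by
    intro t
    have h1 : HasDerivAt (fun t : ℝ => gradient f (x + t • v)) (hess (x + t • v) v) t :=
      by have := (hhess (x + t • v)).comp_hasDerivAt t (hline t); exact this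
    have h2 := h1.inner ℝ (hasDerivAt_const t v)
    have h3 : ⟪gradient f (x + t • v), (0 : EuclideanSpace ℝ (Fin d))⟫ + ⟪hess (x + t • v) v, v⟫
        = ⟪hess (x + t • v) v, v⟫ := by rw [inner_zero_right, zero_add]
    rw [h3] at h2
    exact h2
  -- first-order remainder ψ
  set ψ : ℝ → ℝ := fun t => ⟪gradient f (x + t • v), v⟫ - ⟪gradient f x, v⟫ -
    t * ⟪hess x v, v⟫ with hψ
  have hψd : ∀ t : ℝ, HasDerivAt ψ (⟪hess (x + t • v) v, v⟫ - ⟪hess x v, v⟫) t := by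
    intro t
    have h := ((hg' t).sub_const ⟪gradient f x, v⟫).sub
      ((hasDerivAt_id t).mul_const ⟪hess x v, v⟫)
    rw [one_mul] at h
    exact h
  -- bound on ψ'
  have hψ'bound : ∀ t ∈ Set.Icc (0:ℝ) 1,
      |⟪hess (x + t • v) v, v⟫ - ⟪hess x v, v⟫| ≤ L * s ^ 3 * t := by
    intro t ht
    have h1 := hssc x (x + t • v) v v
    have h2 : (x + t • v) - x = t • v := by abel
    have h3 : ⟪hess x (t • v), t • v⟫ = t ^ 2 * ⟪hess x v, v⟫ := by
      rw [map_smul, real_inner_smul_left, real_inner_smul_right]; ring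
    have h4 : Real.sqrt ⟪hess x (t • v), t • v⟫ = t * s := by
      rw [h3, Real.sqrt_mul (sq_nonneg t), Real.sqrt_sq ht.1, hs]
    have h5 : ⟪(hess (x + t • v) - hess x) v, v⟫ =
        ⟪hess (x + t • v) v, v⟫ - ⟪hess x v, v⟫ := by
      simp [inner_sub_left]
    rw [h5, h2, h4] at h1
    calc |⟪hess (x + t • v) v, v⟫ - ⟪hess x v, v⟫| ≤ L * (t * s) * (s * s) := h1
      _ = L * s ^ 3 * t := by ring
  -- derivative of quadratic bound
  have hB2 : ∀ u : ℝ, HasDerivAt (fun u : ℝ => L * s ^ 3 * u ^ 2 / 2) (L * s ^ 3 * u) u := by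
    intro u
    have h := ((hasDerivAt_pow 2 u).const_mul (L * s ^ 3)).div_const 2
    exact h.congr_deriv (by push_cast; ring)
  -- first integration: |ψ t| ≤ L s³ t²/2
  have hψbound : ∀ t ∈ Set.Icc (0:ℝ) 1, |ψ t| ≤ L * s ^ 3 * t ^ 2 / 2 := by
    intro t ht
    have h := aux_bound ψ (fun u => L * s ^ 3 * u ^ 2 / 2) _ _ hψd hB2 hψ'bound ht
    have hψ0 : ψ 0 = 0 := by simp [hψ]
    simp only [hψ0, sub_zero] at h
    simpa using h
  -- second-order remainder φ
  set φ : ℝ → ℝ := fun t => f (x + t • v) - f x - t * ⟪gradient f x, v⟫ -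
    t ^ 2 / 2 * ⟪hess x v, v⟫ with hφ
  have hφd : ∀ t : ℝ, HasDerivAt φ (ψ t) t := by
    intro t
    have h1 := ((hg t).sub_const (f x)).sub ((hasDerivAt_id t).mul_const ⟪gradient f x, v⟫)
    have h2 := h1.sub (((hasDerivAt_pow 2 t).div_const 2).mul_const ⟪hess x v, v⟫)
    exact h2.congr_deriv (by simp only [hψ]; push_cast; ring)
  -- derivative of cubic bound
  have hB3 : ∀ u : ℝ, HasDerivAt (fun u : ℝ => L * s ^ 3 * u ^ 3 / 6)
      (L * s ^ 3 * u ^ 2 / 2) u := by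
    intro u
    have h := ((hasDerivAt_pow 3 u).const_mul (L * s ^ 3)).div_const 6
    exact h.congr_deriv (by push_cast; ring)
  have hfinal := aux_bound φ (fun u => L * s ^ 3 * u ^ 3 / 6) _ _ hφd hB3 hψbound
    (Set.right_mem_Icc.2 zero_le_one)
  have hφ0 : φ 0 = 0 := by simp [hφ]
  have h1v : x + (1:ℝ) • v = y := by rw [hv]; simp
  have hφ1 : φ 1 = f y - f x - ⟪gradient f x, v⟫ - 1 / 2 * ⟪hess x v, v⟫ := by
    simp only [hφ, h1v, one_pow, one_mul]
  calc |f y - f x - ⟪gradient f x, v⟫ - 1 / 2 * ⟪hess x v, v⟫| = |φ 1 - φ 0| := by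
        rw [hφ0, hφ1, sub_zero]
    _ ≤ L * s ^ 3 * 1 ^ 3 / 6 - L * s ^ 3 * 0 ^ 3 / 6 := hfinal
    _ = L / 6 * s ^ 3 := by ring
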